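/- Let $k$ be a positive integer, let $n \ge 2k+3$, and let $M_k$ be a minimum distance-$k$ resolving set of the cycle $C_n$. Then: (a) every gap of $M_k$ contains at most $2k+1$ vertices, and at most one gap of $M_k$ contains exactly $2k+1$ vertices; (b) if a gap of $M_k$ contains at least $k+1$ vertices, then each of its neighboring gaps contains at most $k$ vertices. -/

import Mathlib

open SimpleGraph

/-- The distance-`k` truncated distance `dₖ(x,y) = min{d(x,y), k+1}`, valued in `ℕ∞`
(so unreachable pairs have distance `⊤`, which is truncated to `k+1`). -/
noncomputable def distK {V : Type*} (G : SimpleGraph V) (k : ℕ) (x y : V) : ℕ∞ :=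
  min (G.edist x y) (k + 1)

/-- `S` is a distance-`k` resolving set of `G`. -/
def IsDistKResolving {V : Type*} (G : SimpleGraph V) (k : ℕ) (S : Set V) : Prop :=
  ∀ x y : V, x ≠ y → ∃ z ∈ S, distK G k x z ≠ distK G k y z

/-- The distance-`k` dimension of a finite graph `G`: the minimum cardinality of a
distance-`k` resolving set of `G`. -/
noncomputable def dimK {V : Type*} [Fintype V] (G : SimpleGraph V) (k : ℕ) : ℕ :=
  sInf { m | ∃ S : Finset V, IsDistKResolving G k ↑S ∧ S.card = m }

/-- The cycle on the vertices `u₀, u₁, …, u_{n-1}` (identified with `ZMod n`),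
with `uᵢ` adjacent to `u_{i±1}` (indices mod `n`). -/
def cycleZMod (n : ℕ) : SimpleGraph (ZMod n) where
  Adj x y := x ≠ y ∧ (x - y = 1 ∨ y - x = 1)
  symm := by
    constructor
    rintro x y ⟨hxy, h⟩
    exact ⟨hxy.symm, h.symm⟩
  loopless := by
    constructor
    rintro x ⟨hx, _⟩
    exact hx rfl

/-- `IsGap M i l` : the vertices `i` and `i + (l+1)` are neighboring vertices of `M`
on the cycle and the `l` vertices `i+1, …, i+l` strictly between them form the
corresponding gap of `M`. -/
def IsGap {n : ℕ} (M : Set (ZMod n)) (i : ZMod n) (l : ℕ) : Prop :=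
  l + 1 < n ∧ i ∈ M ∧ i + ((l : ℕ) + 1 : ℕ) ∈ M ∧
    ∀ t : ℕ, 1 ≤ t → t ≤ l → i + (t : ZMod n) ∉ M

section Aux

variable {n : ℕ} [NeZero n]

/-- circular distance on `ZMod n` -/
def Dc (x y : ZMod n) : ℕ := min ((y - x).val) ((x - y).val)

/-- nat version of circular distance between coordinates -/
def cdd (n a b : ℕ) : ℕ := min (max (a - b) (b - a)) (n - max (a - b) (b - a))

lemma natCast_val_self (a : ZMod n) : ((a.val : ℕ) : ZMod n) = a := by
  rw [ZMod.natCast_val, ZMod.cast_id]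

lemma zval_sub' (c d : ZMod n) :
    (c - d).val = if d.val ≤ c.val then c.val - d.val else c.val + n - d.val := by
  split_ifs with h
  · exact ZMod.val_sub h
  · push_neg at h
    have hdn := d.val_lt
    have hm : c.val + n - d.val < n := by omega
    have hle : d.val ≤ c.val + n := by omega
    have hcast : ((c.val + n - d.val : ℕ) : ZMod n) = c - d := by
      rw [Nat.cast_sub hle, Nat.cast_add, ZMod.natCast_self, natCast_val_self,
        natCast_val_self]
      ring
    rw [← hcast, ZMod.val_natCast_of_lt hm]

lemma Dc_vals (c d : ZMod n) :
    min ((d - c).val) ((c - d).val) = cdd n c.val d.val := by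
  have h1 := c.val_lt
  have h2 := d.val_lt
  rw [zval_sub', zval_sub']
  unfold cdd
  split_ifs <;> omega

lemma Dc_coord (i x y : ZMod n) : Dc x y = cdd n ((x - i).val) ((y - i).val) := by
  have h1 : y - x = (y - i) - (x - i) := by ring
  have h2 : x - y = (x - i) - (y - i) := by ring
  unfold Dc
  rw [h1, h2]
  exact Dc_vals (x - i) (y - i)

lemma coord_add (i : ZMod n) (t : ℕ) : ((i + (t : ZMod n)) - i).val = t % n := by
  have : (i + (t : ZMod n)) - i = (t : ZMod n) := by ring
  rw [this, ZMod.val_natCast]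

lemma edist_add_le (hn2 : 2 ≤ n) (x : ZMod n) (m : ℕ) :
    (cycleZMod n).edist x (x + ((m : ℕ) : ZMod n)) ≤ (m : ℕ∞) := by
  haveI : Fact (1 < n) := ⟨by omega⟩
  induction m with
  | zero => simp [SimpleGraph.edist_self]
  | succ m ih =>
    have hadj : (cycleZMod n).Adj (x + ((m : ℕ) : ZMod n)) (x + (((m+1 : ℕ)) : ZMod n)) := by
      refine ⟨?_, Or.inr ?_⟩
      · intro h
        have h2 : ((m : ℕ) : ZMod n) = ((m+1 : ℕ) : ZMod n) := add_left_cancel h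
        push_cast at h2
        have h3 : (m : ZMod n) + 0 = (m : ZMod n) + 1 := by rw [add_zero]; exact h2
        exact one_ne_zero (add_left_cancel h3).symm
      · push_cast; ring
    have h1 : (cycleZMod n).edist (x + ((m : ℕ) : ZMod n)) (x + ((m+1 : ℕ) : ZMod n)) ≤ 1 := by
      have := SimpleGraph.edist_le (Walk.cons hadj Walk.nil)
      simpa using this
    calc (cycleZMod n).edist x (x + ((m+1 : ℕ) : ZMod n))
        ≤ (cycleZMod n).edist x (x + ((m : ℕ) : ZMod n)) +
            (cycleZMod n).edist (x + ((m : ℕ) : ZMod n)) (x + ((m+1 : ℕ) : ZMod n)) :=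
          SimpleGraph.edist_triangle
      _ ≤ (m : ℕ∞) + 1 := add_le_add ih h1
      _ = ((m+1 : ℕ) : ℕ∞) := by push_cast; ring

lemma Dc_lip (hn2 : 2 ≤ n) {x b : ZMod n} (h : (cycleZMod n).Adj x b) (y : ZMod n) :
    Dc x y ≤ Dc b y + 1 := by
  haveI : Fact (1 < n) := ⟨by omega⟩
  have h' : x ≠ b ∧ (x - b = 1 ∨ b - x = 1) := h
  obtain ⟨hne, hd | hd⟩ := h'
  · -- b = x - 1
    by_cases hyb : y = b
    · have h1 : x - y = 1 := by rw [hyb]; exact hd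
      have h2 : (x - y).val = 1 := by rw [h1, ZMod.val_one]
      unfold Dc; omega
    · have hyb' : y - b ≠ 0 := sub_ne_zero.mpr hyb
      have hybv : (y - b).val ≠ 0 := by rwa [Ne, ZMod.val_eq_zero]
      have h1 : (x - y).val ≤ (b - y).val + 1 := by
        have e : x - y = (b - y) + 1 := by rw [← hd]; ring
        rw [e, ZMod.val_add]
        calc ((b - y).val + (1 : ZMod n).val) % n ≤ (b - y).val + (1 : ZMod n).val :=
              Nat.mod_le _ _
          _ = (b - y).val + 1 := by rw [ZMod.val_one]
      have h2 : (y - x).val = (y - b).val - 1 := by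
        have e : y - x = (y - b) - 1 := by rw [← hd]; ring
        rw [e, ZMod.val_sub (by rw [ZMod.val_one]; omega), ZMod.val_one]
      unfold Dc; omega
  · -- b = x + 1
    by_cases hby : b = y
    · have h1 : y - x = 1 := by rw [← hby]; exact hd
      have h2 : (y - x).val = 1 := by rw [h1, ZMod.val_one]
      unfold Dc; omega
    · have hby' : b - y ≠ 0 := sub_ne_zero.mpr hby
      have hbyv : (b - y).val ≠ 0 := by rwa [Ne, ZMod.val_eq_zero]
      have h1 : (y - x).val ≤ (y - b).val + 1 := by
        have e : y - x = (y - b) + 1 := by rw [← hd]; ring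
        rw [e, ZMod.val_add]
        calc ((y - b).val + (1 : ZMod n).val) % n ≤ (y - b).val + (1 : ZMod n).val :=
              Nat.mod_le _ _
          _ = (y - b).val + 1 := by rw [ZMod.val_one]
      have h2 : (x - y).val = (b - y).val - 1 := by
        have e : x - y = (b - y) - 1 := by rw [← hd]; ring
        rw [e, ZMod.val_sub (by rw [ZMod.val_one]; omega), ZMod.val_one]
      unfold Dc; omega

lemma Dc_le_length (hn2 : 2 ≤ n) {x y : ZMod n} (w : (cycleZMod n).Walk x y) :
    Dc x y ≤ w.length := by
  induction w with
  | nil => simp [Dc]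
  | @cons a b c' h p ih =>
    have h1 := Dc_lip hn2 h c'
    have h2 : (Walk.cons h p).length = p.length + 1 := Walk.length_cons _ _
    omega

lemma enat_cast_min (a b : ℕ) : ((min a b : ℕ) : ℕ∞) = min (a : ℕ∞) (b : ℕ∞) := by
  rcases le_total a b with h | h
  · rw [min_eq_left h, min_eq_left (by exact_mod_cast h)]
  · rw [min_eq_right h, min_eq_right (by exact_mod_cast h)]

lemma edist_cyc (hn2 : 2 ≤ n) (x y : ZMod n) :
    (cycleZMod n).edist x y = (Dc x y : ℕ∞) := by
  have h1 : (cycleZMod n).edist x y ≤ (((y - x).val : ℕ) : ℕ∞) := by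
    have h := edist_add_le hn2 x ((y - x).val)
    have hx : x + (((y - x).val : ℕ) : ZMod n) = y := by rw [natCast_val_self]; ring
    rwa [hx] at h
  have h2 : (cycleZMod n).edist x y ≤ (((x - y).val : ℕ) : ℕ∞) := by
    have h := edist_add_le hn2 y ((x - y).val)
    have hx : y + (((x - y).val : ℕ) : ZMod n) = x := by rw [natCast_val_self]; ring
    rw [hx] at h
    rwa [SimpleGraph.edist_comm] at h
  have hub : (cycleZMod n).edist x y ≤ (Dc x y : ℕ∞) := by
    unfold Dc
    rw [enat_cast_min]
    exact le_min h1 h2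
  refine le_antisymm hub ?_
  have hne : (cycleZMod n).edist x y ≠ ⊤ :=
    ne_top_of_le_ne_top (ENat.coe_ne_top _) hub
  obtain ⟨p, hp⟩ := SimpleGraph.exists_walk_of_edist_ne_top hne
  rw [← hp]
  exact_mod_cast Dc_le_length hn2 p

lemma distK_cyc (hn2 : 2 ≤ n) (k : ℕ) (x y : ZMod n) :
    distK (cycleZMod n) k x y = ((min (Dc x y) (k+1) : ℕ) : ℕ∞) := by
  unfold distK
  rw [edist_cyc hn2, enat_cast_min]
  norm_cast

lemma gap_coord {M : Set (ZMod n)} {i : ZMod n} {l : ℕ} (hG : IsGap M i l)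
    {z : ZMod n} (hz : z ∈ M) : (z - i).val = 0 ∨ l + 1 ≤ (z - i).val := by
  by_contra hc
  push_neg at hc
  obtain ⟨h0, hl⟩ := hc
  have hmem : i + (((z - i).val : ℕ) : ZMod n) = z := by rw [natCast_val_self]; ring
  exact hG.2.2.2 ((z - i).val) (by omega) (by omega) (by rw [hmem]; exact hz)

lemma far {M : Set (ZMod n)} {i : ZMod n} {l k : ℕ} (hG : IsGap M i l) {t : ℕ}
    (ht1 : k + 1 ≤ t) (ht2 : t + k ≤ l) {z : ZMod n} (hz : z ∈ M) :
    min (Dc (i + (t : ZMod n)) z) (k+1) = k + 1 := by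
  have hln : l + 1 < n := hG.1
  have hcz := gap_coord hG hz
  have hzlt := (z - i).val_lt
  rw [Dc_coord i, coord_add, Nat.mod_eq_of_lt (show t < n by omega)]
  unfold cdd
  omega

lemma gap_le {k : ℕ} {M : Finset (ZMod n)}
    (hres : IsDistKResolving (cycleZMod n) k ↑M)
    {i : ZMod n} {l : ℕ} (hG : IsGap (↑M : Set (ZMod n)) i l) : l ≤ 2*k+1 := by
  by_contra hcon
  push_neg at hcon
  have hln : l + 1 < n := hG.1
  have hn2 : 2 ≤ n := by omega
  have hxy : (i + (((k+1 : ℕ)) : ZMod n)) ≠ (i + (((k+2 : ℕ)) : ZMod n)) := by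
    intro he
    have h2 := congrArg ZMod.val (add_left_cancel he)
    rw [ZMod.val_natCast, ZMod.val_natCast, Nat.mod_eq_of_lt (show k+1 < n by omega),
      Nat.mod_eq_of_lt (show k+2 < n by omega)] at h2
    omega
  obtain ⟨z, hzM, hzne⟩ := hres _ _ hxy
  simp only [distK_cyc hn2, ne_eq, Nat.cast_inj] at hzne
  exact hzne (by rw [far hG le_rfl (by omega) hzM, far hG (by omega) (by omega) hzM])

lemma no_two_big {k : ℕ} (hk : 1 ≤ k) {M : Finset (ZMod n)}
    (hres : IsDistKResolving (cycleZMod n) k ↑M)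
    {i : ZMod n} {l l' : ℕ} (hG1 : IsGap (↑M : Set (ZMod n)) i l)
    (hG2 : IsGap (↑M : Set (ZMod n)) (i + (((l : ℕ) + 1 : ℕ) : ZMod n)) l')
    (hl : k + 1 ≤ l) (hl' : k + 1 ≤ l') : False := by
  have hln : l + 1 < n := hG1.1
  have hl'n : l' + 1 < n := hG2.1
  have hn2 : 2 ≤ n := by omega
  -- n ≥ l + l' + 2
  have hnll : l + l' + 2 ≤ n := by
    by_contra hc
    push_neg at hc
    have h1 : (i + (((l : ℕ) + 1 : ℕ) : ZMod n)) + (((n - l - 1 : ℕ)) : ZMod n) = i := by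
      have hsum : ((l : ℕ) + 1 : ℕ) + (n - l - 1 : ℕ) = n := by omega
      calc (i + (((l : ℕ) + 1 : ℕ) : ZMod n)) + (((n - l - 1 : ℕ)) : ZMod n)
          = i + (((((l : ℕ) + 1 : ℕ) + (n - l - 1 : ℕ) : ℕ)) : ZMod n) := by
            push_cast; ring
        _ = i + ((n : ℕ) : ZMod n) := by rw [hsum]
        _ = i := by rw [ZMod.natCast_self, add_zero]
    exact hG2.2.2.2 (n - l - 1) (by omega) (by omega) (by rw [h1]; exact hG1.2.1)
  have hxy : (i + (((l : ℕ)) : ZMod n)) ≠ (i + (((l+2 : ℕ)) : ZMod n)) := by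
    intro he
    have h2 := congrArg ZMod.val (add_left_cancel he)
    rw [ZMod.val_natCast, ZMod.val_natCast, Nat.mod_eq_of_lt (show l < n by omega),
      Nat.mod_eq_of_lt (show l+2 < n by omega)] at h2
    omega
  obtain ⟨z, hzM, hzne⟩ := hres _ _ hxy
  simp only [distK_cyc hn2, ne_eq, Nat.cast_inj] at hzne
  have hc1 := gap_coord hG1 hzM
  have hc2 := gap_coord hG2 hzM
  set c := (z - i).val with hc
  set d := (z - (i + (((l : ℕ) + 1 : ℕ) : ZMod n))).val with hd
  have hclt : c < n := ZMod.val_lt _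
  have hdlt : d < n := ZMod.val_lt _
  have hcd : c = (d + (l+1)) % n := by
    have e : z - i = (z - (i + (((l : ℕ) + 1 : ℕ) : ZMod n))) + (((l : ℕ) + 1 : ℕ) : ZMod n) := by
      ring
    rw [hc, e, ZMod.val_add, ZMod.val_natCast, Nat.mod_eq_of_lt (show (l : ℕ) + 1 < n from hln)]
  have hsplit : (d + (l+1) < n ∧ c = d + (l+1)) ∨ (n ≤ d + (l+1) ∧ c = d + (l+1) - n) := by
    rcases Nat.lt_or_ge (d + (l+1)) n with h | h
    · exact Or.inl ⟨h, by rw [hcd, Nat.mod_eq_of_lt h]⟩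
    · refine Or.inr ⟨h, ?_⟩
      rw [hcd, Nat.mod_eq_sub_mod h, Nat.mod_eq_of_lt (by omega)]
  apply hzne
  rw [Dc_coord i, Dc_coord i, coord_add, coord_add,
    Nat.mod_eq_of_lt (show l < n by omega), Nat.mod_eq_of_lt (show l+2 < n by omega)]
  unfold cdd
  omega

end Aux

/-- For a minimum distance-`k` resolving set `M` of `Cₙ` (`n ≥ 2k+3`):
(a) every gap of `M` has at most `2k+1` vertices, and at most one gap has exactly
`2k+1` vertices; (b) a gap with at least `k+1` vertices has all neighboring gaps
of at most `k` vertices. -/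
theorem stmt12 (k n : ℕ) [NeZero n] (hk : 1 ≤ k) (hn : 2 * k + 3 ≤ n)
    (M : Finset (ZMod n))
    (hres : IsDistKResolving (cycleZMod n) k ↑M)
    (hmin : ∀ M' : Finset (ZMod n),
      IsDistKResolving (cycleZMod n) k ↑M' → M.card ≤ M'.card) :
    (∀ (i : ZMod n) (l : ℕ), IsGap (↑M) i l → l ≤ 2 * k + 1) ∧
    (∀ (i i' : ZMod n) (l l' : ℕ), IsGap (↑M) i l → IsGap (↑M) i' l' →
      l = 2 * k + 1 → l' = 2 * k + 1 → i = i') ∧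
    (∀ (i : ZMod n) (l : ℕ), IsGap (↑M) i l → k + 1 ≤ l →
      ∀ (j : ZMod n) (l' : ℕ), IsGap (↑M) j l' →
        (j = i + ((l : ℕ) + 1 : ℕ) ∨ i = j + ((l' : ℕ) + 1 : ℕ)) → l' ≤ k) := by
  have hn2 : 2 ≤ n := by omega
  refine ⟨?_, ?_, ?_⟩
  · intro i l hG
    have := gap_le hres hG
    omega
  · intro i i' l l' hG hG' hl hl'
    by_contra hii
    have hxy : (i + (((k+1 : ℕ)) : ZMod n)) ≠ (i' + (((k+1 : ℕ)) : ZMod n)) :=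
      fun he => hii (add_right_cancel he)
    obtain ⟨z, hzM, hzne⟩ := hres _ _ hxy
    simp only [distK_cyc hn2, ne_eq, Nat.cast_inj] at hzne
    exact hzne (by rw [far hG le_rfl (by omega) hzM, far hG' le_rfl (by omega) hzM])
  · intro i l hG hl j l' hG' hcase
    by_contra hlk
    push_neg at hlk
    rcases hcase with h | h
    · rw [h] at hG'
      exact no_two_big hk hres hG hG' hl (by omega)
    · rw [h] at hG
      exact no_two_big hk hres hG' hG (by omega) hl
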